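/- Let p be a prime and α a positive integer. For every 1 ≤ k ≤ p^α(p-1), the unsigned Stirling number of the first kind satisfies s(p^α(p-1), k) ≡ 1 (mod p) if p^(α-1)(p-1) divides k, and s(p^α(p-1), k) ≡ 0 (mod p) otherwise. -/

import Mathlib

open Nat

/-- Unsigned Stirling numbers of the first kind: `stirling1 n k` is the number
of permutations of `n` elements with exactly `k` cycles, so that
`x(x+1)⋯(x+n-1) = Σ_k stirling1 n k * x^k`. -/
def stirling1 : ℕ → ℕ → ℕ
  | 0, 0 => 1
  | 0, _ + 1 => 0
  | _ + 1, 0 => 0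
  | n + 1, k + 1 => n * stirling1 n (k + 1) + stirling1 n k

open Polynomial Finset in
theorem coeff_ascPochhammer_eq_stirling1 (n k : ℕ) :
    (ascPochhammer ℕ n).coeff k = stirling1 n k := by
  induction n generalizing k with
  | zero =>
    cases k with
    | zero => simp [ascPochhammer, stirling1]
    | succ k => simp [ascPochhammer, stirling1, coeff_one]
  | succ n ih =>
    rw [ascPochhammer_succ_right, show ((n : ℕ) : ℕ[X]) = C (n:ℕ) by simp, mul_add, coeff_add,
      coeff_mul_C]
    cases k with
    | zero =>
      rw [mul_coeff_zero, coeff_X_zero, mul_zero, zero_add, ih]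
      cases n with
      | zero => simp [stirling1]
      | succ m => simp [show stirling1 (m+1) 0 = 0 from rfl, show stirling1 (m+2) 0 = 0 from rfl]
    | succ k =>
      rw [coeff_mul_X, ih, ih]
      show stirling1 n k + stirling1 n (k+1) * n = stirling1 (n+1) (k+1)
      rw [show stirling1 (n+1) (k+1) = n * stirling1 n (k + 1) + stirling1 n k from rfl]
      ring

open Polynomial Finset in
theorem ascPochhammer_eq_prod_aux (S : Type*) [CommSemiring S] (n : ℕ) :
    ascPochhammer S n = ∏ i ∈ range n, (X + (i : S[X])) := by
  induction n with
  | zero => simp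
  | succ n ih => rw [ascPochhammer_succ_right, ih, prod_range_succ]

open Polynomial Finset in
theorem ascPochhammer_zmod (p : ℕ) [Fact p.Prime] :
    ascPochhammer (ZMod p) p = X ^ p - X := by
  have hcard : Fintype.card (ZMod p) = p := ZMod.card p
  have hmonic : (X ^ p - X : (ZMod p)[X]).Monic := by
    apply (monic_X_pow p).sub_of_left
    rw [degree_X_pow, degree_X]
    exact_mod_cast (Fact.out : p.Prime).one_lt
  have hroots : (X ^ p - X : (ZMod p)[X]).roots = Finset.univ.val := by
    have := FiniteField.roots_X_pow_card_sub_X (ZMod p)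
    rwa [hcard] at this
  have hdeg : (X ^ p - X : (ZMod p)[X]).natDegree = p :=
    FiniteField.X_pow_card_sub_X_natDegree_eq _ (Fact.out : p.Prime).one_lt
  have key : (X ^ p - X : (ZMod p)[X]) = ∏ a : ZMod p, (X - C a) := by
    have h := C_leadingCoeff_mul_prod_multiset_X_sub_C (p := (X ^ p - X : (ZMod p)[X]))
      (by rw [hroots, hdeg]; simp [hcard])
    rw [hmonic.leadingCoeff, map_one, one_mul, hroots] at h
    rw [← h]
    rfl
  rw [ascPochhammer_eq_prod_aux, key]
  rw [← Equiv.prod_comp (Equiv.neg (ZMod p)) (fun a => X - C a)]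
  simp only [Equiv.neg_apply, map_neg, sub_neg_eq_add]
  refine Finset.prod_nbij' (fun i => (i : ZMod p)) (fun a => a.val) ?_ ?_ ?_ ?_ ?_
  · intro a _; exact mem_univ _
  · intro a _; exact mem_range.mpr (ZMod.val_lt a)
  · intro i hi; exact ZMod.val_cast_of_lt (mem_range.mp hi)
  · intro a _; simp [ZMod.natCast_val, ZMod.cast_id]
  · intro i _; simp

open Polynomial Finset in
theorem ascPochhammer_zmod_mul (p : ℕ) [Fact p.Prime] (t : ℕ) :
    ascPochhammer (ZMod p) (p * t) = (X ^ p - X) ^ t := by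
  induction t with
  | zero => simp
  | succ t ih =>
    rw [mul_add, mul_one, ← ascPochhammer_mul, ih, show (((p * t : ℕ)) : (ZMod p)[X]) = 0 by
      simp, add_zero, ascPochhammer_zmod, pow_succ, Polynomial.comp_X]

open Polynomial Finset in
theorem key_identity (p : ℕ) [Fact p.Prime] (α : ℕ) (hα : 0 < α) :
    ascPochhammer (ZMod p) (p ^ α * (p - 1)) =
      ∑ j ∈ range p, X ^ ((j + 1) * (p ^ (α - 1) * (p - 1))) := by
  have hp : p.Prime := Fact.out
  set m := p ^ (α - 1) * (p - 1) with hm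
  have hchar : CharP ((ZMod p)[X]) p := inferInstance
  have h1 : p ^ α * (p - 1) = p * (p ^ (α - 1) * (p - 1)) := by
    rw [← mul_assoc, ← pow_succ']
    congr 2
    omega
  rw [h1, ascPochhammer_zmod_mul, pow_mul, sub_pow_char_pow,
    ← pow_mul, ← pow_succ']
  have h2 : α - 1 + 1 = α := by omega
  rw [Nat.succ_eq_add_one, h2]
  have h3 : (X : (ZMod p)[X]) ^ p ^ α - X ^ p ^ (α - 1) = X ^ p ^ (α - 1) * (X ^ m - 1) := by
    rw [mul_sub, mul_one, ← pow_add]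
    congr 2
    have h2p := hp.two_le
    symm
    calc p ^ (α - 1) + m = p ^ (α - 1) * (1 + (p - 1)) := by rw [hm]; ring
      _ = p ^ (α - 1) * p := by congr 1; omega
      _ = p ^ α := by rw [← pow_succ, h2]
  have hm0 : m ≠ 0 := by
    have h2p : 2 ≤ p := hp.two_le
    have hq : p - 1 ≠ 0 := by omega
    simp [hm]; omega
  have hc : (X ^ m - 1 : (ZMod p)[X]) ≠ 0 := by
    intro h
    have := congrArg (eval 0) h
    simp [zero_pow hm0] at this
  have hgeom : (X ^ m - 1 : (ZMod p)[X]) ^ (p - 1) = ∑ j ∈ range p, (X ^ m) ^ j := by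
    apply mul_right_cancel₀ hc
    rw [geom_sum_mul, ← pow_succ, Nat.sub_add_cancel hp.one_le, sub_pow_char, one_pow]
  rw [h3, mul_pow, ← pow_mul, hgeom, mul_sum]
  apply Finset.sum_congr rfl
  intro j _
  rw [← pow_mul, ← pow_add, ← hm]
  congr 1
  ring

open Polynomial Finset in
/-- For a prime `p`, a positive integer `α` and `1 ≤ k ≤ p^α(p-1)`:
`s(p^α(p-1), k) ≡ 1 (mod p)` if `p^(α-1)(p-1) ∣ k`, and
`s(p^α(p-1), k) ≡ 0 (mod p)` otherwise. -/
theorem stirling1_pow_mod (p : ℕ) (hp : p.Prime) (α : ℕ) (hα : 0 < α) (k : ℕ)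
    (hk1 : 1 ≤ k) (hk2 : k ≤ p ^ α * (p - 1)) :
    stirling1 (p ^ α * (p - 1)) k ≡ (if p ^ (α - 1) * (p - 1) ∣ k then 1 else 0) [MOD p] := by
  haveI : Fact p.Prime := ⟨hp⟩
  set n := p ^ α * (p - 1) with hn
  set m := p ^ (α - 1) * (p - 1) with hm
  have hm0 : 0 < m := by
    have h2p := hp.two_le
    have : 0 < p ^ (α - 1) := _root_.pow_pos hp.pos _
    have : 0 < p - 1 := by omega
    positivity
  have hnm : n = p * m := by
    rw [hn, hm, ← mul_assoc, ← _root_.pow_succ']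
    congr 2
    omega
  rw [← ZMod.natCast_eq_natCast_iff]
  have hcast : ((stirling1 n k : ℕ) : ZMod p) = (ascPochhammer (ZMod p) n).coeff k := by
    rw [← ascPochhammer_map (Nat.castRingHom (ZMod p)), coeff_map,
      coeff_ascPochhammer_eq_stirling1]
    simp
  rw [hcast, key_identity p α hα, finset_sum_coeff]
  simp only [coeff_X_pow, ← hm]
  push_cast [apply_ite (Nat.cast : ℕ → ZMod p)]
  by_cases hdvd : m ∣ k
  · rw [if_pos hdvd]
    obtain ⟨d, hd⟩ := hdvd
    have hd1 : 1 ≤ d := by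
      rcases Nat.eq_zero_or_pos d with h | h
      · subst h; simp at hd; omega
      · exact h
    have hd' : k = d * m := by rw [hd, mul_comm]
    have hdp : d ≤ p := by
      by_contra h
      push_neg at h
      have : p * m < d * m := (Nat.mul_lt_mul_right hm0).mpr h
      omega
    rw [Finset.sum_eq_single (d - 1)]
    · rw [if_pos (by rw [Nat.sub_add_cancel hd1, ← hd'])]
    · intro j hj hne
      rw [if_neg]
      intro hjk
      apply hne
      rw [hd'] at hjk
      have : j + 1 = d := Nat.eq_of_mul_eq_mul_right hm0 hjk.symm
      omega
    · intro h
      exfalso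
      apply h
      rw [Finset.mem_range]
      omega
  · rw [if_neg hdvd]
    apply Finset.sum_eq_zero
    intro j _
    rw [if_neg]
    intro hjk
    exact hdvd ⟨j + 1, by rw [hjk, mul_comm]⟩
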